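/- arXiv:1203.2053 — 7 statements merged into one kernel-verified Lean document; each statement's English description precedes it below -/
import Mathlib

section
/- Let V be a finite-dimensional symplectic vector space, and let H be a regular subspace of dimension k−1 contained in a regular subspace B of dimension k+1. Then every k-dimensional subspace U with H ⊆ U ⊆ B is tangential, i.e., dim Rad(U) = 1. -/
theorem pencil_between_regulars_is_tangential
    {K V : Type*} [Field K] [AddCommGroup V] [Module K V] [FiniteDimensional K V]
    (Φ : LinearMap.BilinForm K V) (hnd : Φ.Nondegenerate) (halt : Φ.IsAlt)
    (hchar : (2 : K) ≠ 0) (k : ℕ)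
    (H B : Submodule K V) (hHB : H ≤ B)
    (hHreg : H ⊓ Φ.orthogonal H = ⊥) (hBreg : B ⊓ Φ.orthogonal B = ⊥)
    (hH : Module.finrank K H + 1 = k) (hB : Module.finrank K B = k + 1)
    (U : Submodule K V) (hHU : H ≤ U) (hUB : U ≤ B)
    (hU : Module.finrank K U = k) :
    Module.finrank K ↥(U ⊓ Φ.orthogonal U) = 1 := by
  classical
  have hrefl : Φ.IsRefl := halt.isRefl
  set n := Module.finrank K V with hn
  have hOH : Module.finrank K (Φ.orthogonal H) = n - Module.finrank K H :=
    LinearMap.BilinForm.finrank_orthogonal hnd H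
  have hHn : Module.finrank K H ≤ n := Submodule.finrank_le H
  -- find a nonzero x ∈ U ⊓ orthogonal H
  have hsup : Module.finrank K ↥(U ⊔ Φ.orthogonal H) + Module.finrank K ↥(U ⊓ Φ.orthogonal H)
      = Module.finrank K U + Module.finrank K (Φ.orthogonal H) :=
    Submodule.finrank_sup_add_finrank_inf_eq _ _
  have hle : Module.finrank K ↥(U ⊔ Φ.orthogonal H) ≤ n := Submodule.finrank_le _
  have hpos : 0 < Module.finrank K ↥(U ⊓ Φ.orthogonal H) := by omega
  obtain ⟨⟨x, hx⟩, hx0⟩ := Module.finrank_pos_iff_exists_ne_zero.mp hpos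
  have hxU : x ∈ U := hx.1
  have hxOH : x ∈ Φ.orthogonal H := hx.2
  have hx0' : x ≠ 0 := fun h => hx0 (Subtype.ext h)
  have hxH : x ∉ H := by
    intro hxH
    exact hx0' (by simpa [hHreg] using Submodule.mem_inf.mpr ⟨hxH, hxOH⟩)
  -- U = H ⊔ span x
  have hdisj : H ⊓ (K ∙ x) = ⊥ :=
    ((Submodule.disjoint_span_singleton' hx0').mpr hxH).eq_bot
  have hspan : (K ∙ x) ≤ U := Submodule.span_le.mpr (Set.singleton_subset_iff.mpr hxU)
  have hsupU : H ⊔ (K ∙ x) = U := by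
    apply Submodule.eq_of_le_of_finrank_le (sup_le hHU hspan)
    have h2 : Module.finrank K ↥(H ⊔ (K ∙ x)) + Module.finrank K ↥(H ⊓ (K ∙ x))
        = Module.finrank K H + Module.finrank K (K ∙ x) :=
      Submodule.finrank_sup_add_finrank_inf_eq _ _
    rw [hdisj, finrank_bot, add_zero, finrank_span_singleton hx0'] at h2
    omega
  -- x is in the radical of U
  have hxrad : x ∈ U ⊓ Φ.orthogonal U := by
    refine Submodule.mem_inf.mpr ⟨hxU, fun u hu => ?_⟩
    rw [← hsupU] at hu
    obtain ⟨h, hh, s, hs, rfl⟩ := Submodule.mem_sup.mp hu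
    obtain ⟨c, rfl⟩ := Submodule.mem_span_singleton.mp hs
    have h1 : Φ h x = 0 := hxOH h hh
    have h2 : Φ x x = 0 := halt x
    simp [LinearMap.BilinForm.IsOrtho, h1, h2]
  -- upper bound
  have hradOH : U ⊓ Φ.orthogonal U ≤ Φ.orthogonal H :=
    le_trans inf_le_right (LinearMap.BilinForm.orthogonal_le hHU)
  have hdisj2 : (U ⊓ Φ.orthogonal U) ⊓ H = ⊥ := by
    rw [← le_bot_iff, ← hHreg]
    exact le_inf inf_le_right (le_trans inf_le_left hradOH)
  have h3 : Module.finrank K ↥((U ⊓ Φ.orthogonal U) ⊔ H)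
      + Module.finrank K ↥((U ⊓ Φ.orthogonal U) ⊓ H)
      = Module.finrank K ↥(U ⊓ Φ.orthogonal U) + Module.finrank K H :=
    Submodule.finrank_sup_add_finrank_inf_eq _ _
  have h4 : Module.finrank K ↥((U ⊓ Φ.orthogonal U) ⊔ H) ≤ Module.finrank K U :=
    Submodule.finrank_mono (sup_le (le_trans inf_le_left le_rfl) hHU)
  rw [hdisj2, finrank_bot, add_zero] at h3
  have hpos2 : 0 < Module.finrank K ↥(U ⊓ Φ.orthogonal U) :=
    Module.finrank_pos_iff_exists_ne_zero.mpr ⟨⟨x, hxrad⟩, fun h => hx0' (congrArg Subtype.val h)⟩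
  omega
end

section
/- Let V be a finite-dimensional symplectic vector space and H ⊂ B tangential subspaces with dim H = k−1, dim B = k+1, and let p = Rad(H), q = Rad(B). If q ⊆ H then p = q, and consequently no k-dimensional subspace U with H ⊂ U ⊂ B is regular. -/
theorem empty_pencil_case
    {K V : Type*} [Field K] [AddCommGroup V] [Module K V] [FiniteDimensional K V]
    (Φ : LinearMap.BilinForm K V) (hnd : Φ.Nondegenerate) (halt : Φ.IsAlt)
    (hchar : (2 : K) ≠ 0) (k : ℕ)
    (H B p q : Submodule K V) (hHB : H ≤ B)
    (hH : Module.finrank K H + 1 = k) (hBdim : Module.finrank K B = k + 1)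
    (hp : Module.finrank K p = 1) (hq : Module.finrank K q = 1)
    (hradH : H ⊓ Φ.orthogonal H = p) (hradB : B ⊓ Φ.orthogonal B = q)
    (hqH : q ≤ H) :
    p = q ∧ ∀ U : Submodule K V, H ≤ U → U ≤ B → Module.finrank K U = k →
      U ⊓ Φ.orthogonal U ≠ ⊥ := by
  have hqBo : q ≤ Φ.orthogonal B := hradB ▸ inf_le_right
  have hqp : q ≤ p := by
    rw [← hradH]
    exact le_inf hqH (hqBo.trans (Φ.orthogonal_le hHB))
  have hpq : p = q :=
    (Submodule.eq_of_le_of_finrank_le hqp (by rw [hp, hq])).symm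
  refine ⟨hpq, fun U hHU hUB _ hbot => ?_⟩
  have hqU : q ≤ U ⊓ Φ.orthogonal U :=
    le_inf (hqH.trans hHU) (hqBo.trans (Φ.orthogonal_le hUB))
  rw [hbot, le_bot_iff] at hqU
  rw [hqU, finrank_bot] at hq
  exact one_ne_zero hq.symm
end

section
/- Let V be a finite-dimensional symplectic vector space and H ⊂ B tangential subspaces with dim H = k−1, dim B = k+1, p = Rad(H), q = Rad(B), and suppose q ⊄ H. Set L = p + q and U₀ = H + q. Then L is an isotropic line (L ⊆ L^⊥), L ⊥ H, and Rad(U₀) = L; moreover every k-dimensional subspace U with H ⊂ U ⊂ B other than U₀ is regular. -/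
theorem nonempty_pencil_case
    {K V : Type*} [Field K] [AddCommGroup V] [Module K V] [FiniteDimensional K V]
    (Φ : LinearMap.BilinForm K V) (hnd : Φ.Nondegenerate) (halt : Φ.IsAlt)
    (hchar : (2 : K) ≠ 0) (k : ℕ)
    (H B p q : Submodule K V) (hHB : H ≤ B)
    (hH : Module.finrank K H + 1 = k) (hBdim : Module.finrank K B = k + 1)
    (hp : Module.finrank K p = 1) (hq : Module.finrank K q = 1)
    (hradH : H ⊓ Φ.orthogonal H = p) (hradB : B ⊓ Φ.orthogonal B = q)
    (hqH : ¬ q ≤ H) :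
    (p ⊔ q) ≤ Φ.orthogonal (p ⊔ q) ∧
    (p ⊔ q) ≤ Φ.orthogonal H ∧
    (H ⊔ q) ⊓ Φ.orthogonal (H ⊔ q) = p ⊔ q ∧
    (∀ U : Submodule K V, H ≤ U → U ≤ B → Module.finrank K U = k →
      U ≠ H ⊔ q → U ⊓ Φ.orthogonal U = ⊥) := by
  classical
  have hpH : p ≤ H := hradH ▸ inf_le_left
  have hpHo : p ≤ Φ.orthogonal H := hradH ▸ inf_le_right
  have hqB : q ≤ B := hradB ▸ inf_le_left
  have hqBo : q ≤ Φ.orthogonal B := hradB ▸ inf_le_right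
  -- symmetry of the orthogonality relation between subspaces
  have hsymm : ∀ {A C : Submodule K V}, A ≤ Φ.orthogonal C → C ≤ Φ.orthogonal A := by
    intro A C h x hx
    rw [LinearMap.BilinForm.mem_orthogonal_iff]
    intro n hn
    exact halt.isRefl x n (h hn x hx)
  -- orthogonal of a sup
  have hsup : ∀ {A C M : Submodule K V}, M ≤ Φ.orthogonal A → M ≤ Φ.orthogonal C →
      M ≤ Φ.orthogonal (A ⊔ C) := by
    intro A C M h1 h2 x hx
    rw [LinearMap.BilinForm.mem_orthogonal_iff]
    intro n hn
    obtain ⟨a, ha, c, hc, rfl⟩ := Submodule.mem_sup.mp hn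
    have e1 : Φ a x = 0 := h1 hx a ha
    have e2 : Φ c x = 0 := h2 hx c hc
    show Φ (a + c) x = 0
    rw [map_add, LinearMap.add_apply, e1, e2, add_zero]
  have hqHo : q ≤ Φ.orthogonal H := hqBo.trans (Φ.orthogonal_le hHB)
  have hqpo : q ≤ Φ.orthogonal p := hqBo.trans (Φ.orthogonal_le (hpH.trans hHB))
  have hpqo : p ≤ Φ.orthogonal q := hsymm hqpo
  have hppo : p ≤ Φ.orthogonal p := hpHo.trans (Φ.orthogonal_le hpH)
  have hqqo : q ≤ Φ.orthogonal q := hqBo.trans (Φ.orthogonal_le hqB)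
  -- nonzero submodules have positive finrank
  have hnz : ∀ {S : Submodule K V}, S ≠ ⊥ → 1 ≤ Module.finrank K S := by
    intro S hS
    have : Module.finrank K S ≠ 0 := fun h => hS (Submodule.finrank_eq_zero.mp h)
    omega
  -- p ⊓ q = ⊥
  have hpq_bot : p ⊓ q = ⊥ := by
    by_contra hne
    have h1 : p ⊓ q = q :=
      Submodule.eq_of_le_of_finrank_le inf_le_right (by rw [hq]; exact hnz hne)
    have h2 : q ≤ p := h1 ▸ inf_le_left
    have h3 : q = p := Submodule.eq_of_le_of_finrank_le h2 (by rw [hp, hq])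
    exact hqH (h3 ▸ hpH)
  have hLdim : Module.finrank K ↥(p ⊔ q) = 2 := by
    have := Submodule.finrank_sup_add_finrank_inf_eq p q
    rw [hpq_bot] at this
    simp [finrank_bot] at this
    omega
  -- H ⊓ q = ⊥ and dim (H ⊔ q) = k
  have hHq_bot : H ⊓ q = ⊥ := by
    by_contra hne
    have h1 : H ⊓ q = q :=
      Submodule.eq_of_le_of_finrank_le inf_le_right (by rw [hq]; exact hnz hne)
    exact hqH (h1 ▸ inf_le_left)
  have hU0dim : Module.finrank K ↥(H ⊔ q) = k := by
    have := Submodule.finrank_sup_add_finrank_inf_eq H q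
    rw [hHq_bot] at this
    simp [finrank_bot] at this
    omega
  refine ⟨sup_le (hsup hppo hpqo) (hsup hqpo hqqo), sup_le hpHo hqHo, ?_, ?_⟩
  · -- Rad (H ⊔ q) = p ⊔ q
    have hLle : p ⊔ q ≤ (H ⊔ q) ⊓ Φ.orthogonal (H ⊔ q) :=
      le_inf (sup_le (hpH.trans le_sup_left) le_sup_right)
        (sup_le (hsup hpHo hpqo) (hsup hqHo hqqo))
    set R := (H ⊔ q) ⊓ Φ.orthogonal (H ⊔ q) with hR
    have hRoH : R ≤ Φ.orthogonal H := inf_le_right.trans (Φ.orthogonal_le le_sup_left)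
    have hRH : R ⊓ H ≤ p := hradH ▸ le_inf inf_le_right (inf_le_left.trans hRoH)
    have hd1 := Submodule.finrank_sup_add_finrank_inf_eq R H
    have hd2 : Module.finrank K ↥(R ⊔ H) ≤ k :=
      hU0dim ▸ Submodule.finrank_mono (sup_le inf_le_left le_sup_left)
    have hd3 : Module.finrank K ↥(R ⊓ H) ≤ 1 := hp ▸ Submodule.finrank_mono hRH
    have hd4 : Module.finrank K ↥R ≤ 2 := by omega
    exact (Submodule.eq_of_le_of_finrank_le hLle (by omega)).symm
  · intro U hHU hUB hUdim hne
    have hqU : q ⊓ U = ⊥ := by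
      by_contra hne'
      have h1 : q ⊓ U = q :=
        Submodule.eq_of_le_of_finrank_le inf_le_left (by rw [hq]; exact hnz hne')
      have h2 : q ≤ U := h1 ▸ inf_le_right
      have h3 : H ⊔ q = U :=
        Submodule.eq_of_le_of_finrank_le (sup_le hHU h2) (by rw [hUdim, hU0dim])
      exact hne h3.symm
    have hUqB : U ⊔ q = B := by
      refine Submodule.eq_of_le_of_finrank_le (sup_le hUB hqB) ?_
      have := Submodule.finrank_sup_add_finrank_inf_eq U q
      rw [inf_comm] at hqU
      rw [hqU] at this
      simp [finrank_bot] at this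
      omega
    have hq1 : q ≤ Φ.orthogonal (U ⊓ Φ.orthogonal U) :=
      hqBo.trans (Φ.orthogonal_le (inf_le_left.trans hUB))
    have h1 : U ⊓ Φ.orthogonal U ≤ Φ.orthogonal q := hsymm hq1
    have h2 : U ⊓ Φ.orthogonal U ≤ Φ.orthogonal (U ⊔ q) := hsup inf_le_right h1
    rw [hUqB] at h2
    have h3 : U ⊓ Φ.orthogonal U ≤ q := hradB ▸ le_inf (inf_le_left.trans hUB) h2
    have h4 : U ⊓ Φ.orthogonal U ≤ q ⊓ U := le_inf h3 inf_le_left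
    rw [hqU] at h4
    exact le_bot_iff.mp h4
end

section
/- Let V be a finite-dimensional symplectic vector space. A 3-dimensional subspace π contains three 1-dimensional subspaces a₁, a₂, a₃ spanning π such that all three lines aᵢ + aⱼ (i ≠ j) are regular, if and only if dim Rad(π) = 1. -/
open Submodule Module

section Aux

variable {K V : Type*} [Field K] [AddCommGroup V] [Module K V]
  (Φ : LinearMap.BilinForm K V)

/-- A linear combination of `v₁, v₂` orthogonal to both `v₁` and `v₂` is zero,
provided `Φ v₁ v₂ ≠ 0`. -/
private lemma combo_zero (halt : Φ.IsAlt) {v₁ v₂ x : V} (hc : Φ v₁ v₂ ≠ 0)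
    (hx : x ∈ Submodule.span K {v₁} ⊔ Submodule.span K {v₂})
    (h1 : Φ v₁ x = 0) (h2 : Φ v₂ x = 0) : x = 0 := by
  rw [← Submodule.span_union, Set.singleton_union, Submodule.mem_span_pair] at hx
  obtain ⟨a, b, rfl⟩ := hx
  have e1 : Φ v₁ (a • v₁ + b • v₂) = b * Φ v₁ v₂ := by
    simp [halt v₁, mul_comm]
  have e2 : Φ v₂ (a • v₁ + b • v₂) = a * Φ v₂ v₁ := by
    simp [halt v₂, mul_comm]
  rw [e1] at h1; rw [e2] at h2
  have hb : b = 0 := by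
    rcases mul_eq_zero.mp h1 with h | h
    · exact h
    · exact absurd h hc
  have hc' : Φ v₂ v₁ ≠ 0 := by
    rw [← halt.neg_eq]; exact neg_ne_zero.mpr hc
  have ha : a = 0 := by
    rcases mul_eq_zero.mp h2 with h | h
    · exact h
    · exact absurd h hc'
  simp [ha, hb]

/-- A line spanned by two mutually non-orthogonal vectors is regular. -/
private lemma line_reg (halt : Φ.IsAlt) {u w : V} (h : Φ u w ≠ 0) :
    (Submodule.span K {u} ⊔ Submodule.span K {w}) ⊓
      Φ.orthogonal (Submodule.span K {u} ⊔ Submodule.span K {w}) = ⊥ := by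
  rw [Submodule.eq_bot_iff]
  rintro x ⟨hxL, hxO⟩
  rw [SetLike.mem_coe] at hxL hxO
  rw [LinearMap.BilinForm.mem_orthogonal_iff] at hxO
  refine combo_zero Φ halt h hxL ?_ ?_
  · exact hxO u (Submodule.mem_sup_left (Submodule.mem_span_singleton_self u))
  · exact hxO w (Submodule.mem_sup_right (Submodule.mem_span_singleton_self w))

/-- Conversely, if the line through nonzero `u` and `w` is regular then `Φ u w ≠ 0`. -/
private lemma reg_nonorth (halt : Φ.IsAlt) {u w : V} (hu : u ≠ 0)
    (hreg : (Submodule.span K {u} ⊔ Submodule.span K {w}) ⊓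
      Φ.orthogonal (Submodule.span K {u} ⊔ Submodule.span K {w}) = ⊥) :
    Φ u w ≠ 0 := by
  intro h0
  apply hu
  rw [Submodule.eq_bot_iff] at hreg
  refine hreg u ⟨Submodule.mem_sup_left (Submodule.mem_span_singleton_self u), ?_⟩
  rw [SetLike.mem_coe, LinearMap.BilinForm.mem_orthogonal_iff]
  intro n hn
  have hle : Submodule.span K {u} ⊔ Submodule.span K {w} ≤ LinearMap.ker (Φ.flip u) := by
    refine sup_le ?_ ?_ <;> rw [Submodule.span_le, Set.singleton_subset_iff]
    · exact LinearMap.mem_ker.mpr (halt u)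
    · have hwu : Φ w u = 0 := by rw [← halt.neg_eq, h0, neg_zero]
      exact LinearMap.mem_ker.mpr hwu
  exact hle hn

variable [FiniteDimensional K V]

/-- The key construction: a pair of non-orthogonal vectors in a 3-dimensional
subspace produces a radical vector `x₀`, and the radical is 1-dimensional. -/
private lemma key (halt : Φ.IsAlt) {π : Submodule K V} (hπ : Module.finrank K π = 3)
    {v₁ v₂ : V} (h1 : v₁ ∈ π) (h2 : v₂ ∈ π) (hc : Φ v₁ v₂ ≠ 0) :
    ∃ x₀ : V, x₀ ∈ Φ.orthogonal π ∧ x₀ ≠ 0 ∧ Φ v₁ x₀ = 0 ∧ Φ v₂ x₀ = 0 ∧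
      Submodule.span K {v₁} ⊔ Submodule.span K {v₂} ⊔ Submodule.span K {x₀} = π ∧
      Module.finrank K ↥(π ⊓ Φ.orthogonal π) = 1 := by
  have hv₁ : v₁ ≠ 0 := by rintro rfl; simp at hc
  have hv₂ : v₂ ≠ 0 := by rintro rfl; simp at hc
  set L : Submodule K V := Submodule.span K {v₁} ⊔ Submodule.span K {v₂} with hL
  have hLπ : L ≤ π := by
    refine sup_le ?_ ?_ <;> rw [Submodule.span_le, Set.singleton_subset_iff] <;>
      assumption
  -- L is 2-dimensional
  have hinf1 : Submodule.span K {v₁} ⊓ Submodule.span K {v₂} = ⊥ := by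
    rw [Submodule.eq_bot_iff]
    rintro x ⟨hx1, hx2⟩
    obtain ⟨a, ha⟩ := Submodule.mem_span_singleton.mp hx1
    obtain ⟨b, hb⟩ := Submodule.mem_span_singleton.mp hx2
    refine combo_zero Φ halt hc (Submodule.mem_sup_left hx1) ?_ ?_
    · rw [← ha]; simp [halt v₁]
    · rw [← hb]; simp [halt v₂]
  have hLdim : Module.finrank K L = 2 := by
    have := Submodule.finrank_sup_add_finrank_inf_eq
      (Submodule.span K {v₁}) (Submodule.span K {v₂})
    rw [hinf1, finrank_bot, finrank_span_singleton hv₁, finrank_span_singleton hv₂,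
      ← hL] at this
    omega
  -- find a nonzero x₀ ∈ π orthogonal to v₁ and v₂
  obtain ⟨x₀, hx₀π, hx₀ne, hx₀1, hx₀2⟩ :
      ∃ x₀ : V, x₀ ∈ π ∧ x₀ ≠ 0 ∧ Φ v₁ x₀ = 0 ∧ Φ v₂ x₀ = 0 := by
    set g : π →ₗ[K] K × K :=
      LinearMap.prod ((Φ v₁).comp π.subtype) ((Φ v₂).comp π.subtype) with hg
    have hrk := LinearMap.finrank_range_add_finrank_ker g
    have hrange : Module.finrank K (LinearMap.range g) ≤ 2 := by
      have := Submodule.finrank_le (LinearMap.range g)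
      simpa using this
    have hker : 0 < Module.finrank K (LinearMap.ker g) := by
      rw [hπ] at hrk; omega
    have : Nontrivial (LinearMap.ker g) := by
      rwa [Module.finrank_pos_iff] at hker
    obtain ⟨⟨y, hy⟩, hyne⟩ := exists_ne (0 : LinearMap.ker g)
    rw [LinearMap.mem_ker] at hy
    refine ⟨(y : V), y.2, ?_, ?_, ?_⟩
    · intro h0
      apply hyne
      apply Subtype.ext
      apply Subtype.ext
      simpa using h0
    · have := congrArg Prod.fst hy
      simpa [hg] using this
    · have := congrArg Prod.snd hy
      simpa [hg] using this
  -- L ⊔ span x₀ = π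
  have hinf2 : L ⊓ Submodule.span K {x₀} = ⊥ := by
    rw [Submodule.eq_bot_iff]
    rintro x ⟨hxL, hxs⟩
    obtain ⟨t, ht⟩ := Submodule.mem_span_singleton.mp hxs
    refine combo_zero Φ halt hc hxL ?_ ?_ <;> rw [← ht] <;> simp [hx₀1, hx₀2]
  have hspan : L ⊔ Submodule.span K {x₀} = π := by
    refine Submodule.eq_of_le_of_finrank_eq
      (sup_le hLπ (by rwa [Submodule.span_le, Set.singleton_subset_iff])) ?_
    have := Submodule.finrank_sup_add_finrank_inf_eq L (Submodule.span K {x₀})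
    rw [hinf2, finrank_bot, hLdim, finrank_span_singleton hx₀ne] at this
    omega
  -- x₀ is in the radical
  have hx₀orth : x₀ ∈ Φ.orthogonal π := by
    rw [LinearMap.BilinForm.mem_orthogonal_iff]
    intro n hn
    have hle : π ≤ LinearMap.ker (Φ.flip x₀) := by
      rw [← hspan]
      refine sup_le (sup_le ?_ ?_) ?_ <;>
        rw [Submodule.span_le, Set.singleton_subset_iff]
      · exact LinearMap.mem_ker.mpr hx₀1
      · exact LinearMap.mem_ker.mpr hx₀2
      · exact LinearMap.mem_ker.mpr (halt x₀)
    exact hle hn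
  -- the radical has dimension 1
  have hRle : Module.finrank K ↥(π ⊓ Φ.orthogonal π) ≤ 1 := by
    have hinf3 : L ⊓ (π ⊓ Φ.orthogonal π) = ⊥ := by
      rw [Submodule.eq_bot_iff]
      rintro x ⟨hxL, -, hxO⟩
      rw [SetLike.mem_coe] at hxL hxO
      rw [LinearMap.BilinForm.mem_orthogonal_iff] at hxO
      exact combo_zero Φ halt hc hxL (hxO v₁ h1) (hxO v₂ h2)
    have hsum := Submodule.finrank_sup_add_finrank_inf_eq L (π ⊓ Φ.orthogonal π)
    have hsup : L ⊔ (π ⊓ Φ.orthogonal π) ≤ π := sup_le hLπ inf_le_left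
    have hle3 : Module.finrank K ↥(L ⊔ (π ⊓ Φ.orthogonal π)) ≤ 3 := by
      have := Submodule.finrank_mono hsup
      omega
    rw [hinf3, finrank_bot, hLdim] at hsum
    omega
  have hRge : 0 < Module.finrank K ↥(π ⊓ Φ.orthogonal π) := by
    rw [Module.finrank_pos_iff]
    refine ⟨⟨x₀, hx₀π, hx₀orth⟩, 0, ?_⟩
    intro h
    exact hx₀ne (by simpa using congrArg Subtype.val h)
  exact ⟨x₀, hx₀orth, hx₀ne, hx₀1, hx₀2, hspan, by omega⟩

/-- A 1-dimensional submodule is spanned by a nonzero vector. -/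
private lemma rank_one_gen {a : Submodule K V} (ha : Module.finrank K a = 1) :
    ∃ v : V, v ≠ 0 ∧ a = Submodule.span K {v} := by
  have : Nontrivial a := by
    rw [← Module.finrank_pos_iff (R := K)]; omega
  obtain ⟨⟨v, hv⟩, hvne⟩ := exists_ne (0 : a)
  have hv0 : v ≠ 0 := by
    intro h
    exact hvne (Subtype.ext (by simpa using h))
  refine ⟨v, hv0, ?_⟩
  refine (Submodule.eq_of_le_of_finrank_eq ?_ ?_).symm
  · rwa [Submodule.span_le, Set.singleton_subset_iff]
  · rw [finrank_span_singleton hv0, ha]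

end Aux

theorem plane_contains_regular_triangle_iff_tangential
    {K V : Type*} [Field K] [AddCommGroup V] [Module K V] [FiniteDimensional K V]
    (Φ : LinearMap.BilinForm K V) (hnd : Φ.Nondegenerate) (halt : Φ.IsAlt)
    (hchar : (2 : K) ≠ 0)
    (π : Submodule K V) (hπ : Module.finrank K π = 3) :
    (∃ a₁ a₂ a₃ : Submodule K V,
      Module.finrank K a₁ = 1 ∧ Module.finrank K a₂ = 1 ∧ Module.finrank K a₃ = 1 ∧
      a₁ ⊔ a₂ ⊔ a₃ = π ∧
      (a₁ ⊔ a₂) ⊓ Φ.orthogonal (a₁ ⊔ a₂) = ⊥ ∧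
      (a₂ ⊔ a₃) ⊓ Φ.orthogonal (a₂ ⊔ a₃) = ⊥ ∧
      (a₁ ⊔ a₃) ⊓ Φ.orthogonal (a₁ ⊔ a₃) = ⊥) ↔
    Module.finrank K ↥(π ⊓ Φ.orthogonal π) = 1 := by
  constructor
  · rintro ⟨a₁, a₂, a₃, hd1, hd2, hd3, hsup, hr12, hr23, hr13⟩
    obtain ⟨v₁, hv₁ne, rfl⟩ := rank_one_gen hd1
    obtain ⟨v₂, hv₂ne, rfl⟩ := rank_one_gen hd2
    have hc : Φ v₁ v₂ ≠ 0 := reg_nonorth Φ halt hv₁ne hr12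
    have h1 : v₁ ∈ π := by
      rw [← hsup]
      exact Submodule.mem_sup_left
        (Submodule.mem_sup_left (Submodule.mem_span_singleton_self v₁))
    have h2 : v₂ ∈ π := by
      rw [← hsup]
      exact Submodule.mem_sup_left
        (Submodule.mem_sup_right (Submodule.mem_span_singleton_self v₂))
    obtain ⟨x₀, -, -, -, -, -, hfin⟩ := key Φ halt hπ h1 h2 hc
    exact hfin
  · intro hrad
    -- first find a non-orthogonal pair inside π
    have hexists : ∃ v₁ ∈ π, ∃ v₂ ∈ π, Φ v₁ v₂ ≠ 0 := by
      by_contra hcon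
      push_neg at hcon
      have hle : π ≤ Φ.orthogonal π := by
        intro x hx
        rw [LinearMap.BilinForm.mem_orthogonal_iff]
        intro n hn
        exact hcon n hn x hx
      rw [inf_eq_left.mpr hle, hπ] at hrad
      omega
    obtain ⟨v₁, h1, v₂, h2, hc⟩ := hexists
    obtain ⟨x₀, hx₀orth, hx₀ne, hx₀1, hx₀2, hspan, -⟩ := key Φ halt hπ h1 h2 hc
    have hc' : Φ v₂ v₁ ≠ 0 := by
      rw [← halt.neg_eq]; exact neg_ne_zero.mpr hc
    set w : V := v₁ + v₂ + x₀ with hw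
    have hΦ1w : Φ v₁ w = Φ v₁ v₂ := by simp [hw, halt v₁, hx₀1]
    have hΦ2w : Φ v₂ w = Φ v₂ v₁ := by simp [hw, halt v₂, hx₀2]
    have hwne : w ≠ 0 := by
      intro h0
      apply hc
      rw [← hΦ1w, h0, map_zero]
    have h1π : v₁ ∈ π := h1
    have hx₀π : x₀ ∈ π := by
      rw [← hspan]
      exact Submodule.mem_sup_right (Submodule.mem_span_singleton_self x₀)
    have hwπ : w ∈ π := add_mem (add_mem h1 h2) hx₀π
    refine ⟨Submodule.span K {v₁}, Submodule.span K {v₂}, Submodule.span K {w},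
      finrank_span_singleton (by rintro rfl; simp at hc),
      finrank_span_singleton (by rintro rfl; simp at hc),
      finrank_span_singleton hwne, ?_, ?_, ?_, ?_⟩
    · -- the three spans sup to π
      apply le_antisymm
      · refine sup_le (sup_le ?_ ?_) ?_ <;>
          rw [Submodule.span_le, Set.singleton_subset_iff] <;> assumption
      · rw [← hspan]
        refine sup_le (sup_le ?_ ?_) ?_
        · exact le_sup_left.trans le_sup_left
        · exact le_sup_right.trans le_sup_left
        · rw [Submodule.span_le, Set.singleton_subset_iff]
          have hx : x₀ = w - v₁ - v₂ := by rw [hw]; abel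
          rw [hx]
          refine Submodule.sub_mem _ (Submodule.sub_mem _ ?_ ?_) ?_
          · exact Submodule.mem_sup_right (Submodule.mem_span_singleton_self w)
          · exact Submodule.mem_sup_left
              (Submodule.mem_sup_left (Submodule.mem_span_singleton_self v₁))
          · exact Submodule.mem_sup_left
              (Submodule.mem_sup_right (Submodule.mem_span_singleton_self v₂))
    · exact line_reg Φ halt hc
    · exact line_reg Φ halt (by rw [hΦ2w]; exact hc')
    · exact line_reg Φ halt (by rw [hΦ1w]; exact hc)
end

section
/- Let V be a finite-dimensional symplectic vector space and let π₁, π₂ be tangential 3-dimensional subspaces (dim Rad(πᵢ) = 1) sharing a common regular 2-dimensional subspace L. Then Rad(π₁) ⊄ L and Rad(π₂) ⊄ L, and there exist 1-dimensional subspaces a₁ ⊆ π₁ \ (L ∪ Rad(π₁)) and a₂ ⊆ π₂ \ (L ∪ Rad(π₂)) such that a₁ + a₂ is a regular line. -/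
open Module Submodule

theorem planes_sharing_regular_line
    {K V : Type*} [Field K] [AddCommGroup V] [Module K V] [FiniteDimensional K V]
    (Φ : LinearMap.BilinForm K V) (hnd : Φ.Nondegenerate) (halt : Φ.IsAlt)
    (hchar : (2 : K) ≠ 0)
    (π₁ π₂ L : Submodule K V)
    (hπ₁ : Module.finrank K π₁ = 3) (hπ₂ : Module.finrank K π₂ = 3)
    (hrad₁ : Module.finrank K ↥(π₁ ⊓ Φ.orthogonal π₁) = 1)
    (hrad₂ : Module.finrank K ↥(π₂ ⊓ Φ.orthogonal π₂) = 1)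
    (hL : Module.finrank K L = 2) (hLreg : L ⊓ Φ.orthogonal L = ⊥)
    (hLπ₁ : L ≤ π₁) (hLπ₂ : L ≤ π₂) :
    ¬ π₁ ⊓ Φ.orthogonal π₁ ≤ L ∧ ¬ π₂ ⊓ Φ.orthogonal π₂ ≤ L ∧
    ∃ a₁ a₂ : Submodule K V,
      Module.finrank K a₁ = 1 ∧ Module.finrank K a₂ = 1 ∧
      a₁ ≤ π₁ ∧ ¬ a₁ ≤ L ∧ a₁ ≠ π₁ ⊓ Φ.orthogonal π₁ ∧
      a₂ ≤ π₂ ∧ ¬ a₂ ≤ L ∧ a₂ ≠ π₂ ⊓ Φ.orthogonal π₂ ∧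
      (a₁ ⊔ a₂) ⊓ Φ.orthogonal (a₁ ⊔ a₂) = ⊥ := by
  -- pick nonzero radical vectors
  have hne₁ : (π₁ ⊓ Φ.orthogonal π₁ : Submodule K V) ≠ ⊥ := by
    intro h; rw [h] at hrad₁; simp at hrad₁
  obtain ⟨r₁, hr₁mem, hr₁0⟩ := Submodule.exists_mem_ne_zero_of_ne_bot hne₁
  have hne₂ : (π₂ ⊓ Φ.orthogonal π₂ : Submodule K V) ≠ ⊥ := by
    intro h; rw [h] at hrad₂; simp at hrad₂
  obtain ⟨r₂, hr₂mem, hr₂0⟩ := Submodule.exists_mem_ne_zero_of_ne_bot hne₂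
  have hr₁π : r₁ ∈ π₁ := hr₁mem.1
  have hr₂π : r₂ ∈ π₂ := hr₂mem.1
  have hrefl := halt.isRefl
  have hr₁orth : ∀ x ∈ π₁, Φ x r₁ = 0 := fun x hx => hr₁mem.2 x hx
  have hr₂orth : ∀ x ∈ π₂, Φ x r₂ = 0 := fun x hx => hr₂mem.2 x hx
  have hr₁orth' : ∀ x ∈ π₁, Φ r₁ x = 0 := fun x hx => hrefl _ _ (hr₁orth x hx)
  have hr₂orth' : ∀ x ∈ π₂, Φ r₂ x = 0 := fun x hx => hrefl _ _ (hr₂orth x hx)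
  have hr₁L : r₁ ∉ L := by
    intro h
    have : r₁ ∈ L ⊓ Φ.orthogonal L := ⟨h, fun n hn => hr₁orth n (hLπ₁ hn)⟩
    rw [hLreg] at this
    exact hr₁0 this
  have hr₂L : r₂ ∉ L := by
    intro h
    have : r₂ ∈ L ⊓ Φ.orthogonal L := ⟨h, fun n hn => hr₂orth n (hLπ₂ hn)⟩
    rw [hLreg] at this
    exact hr₂0 this
  refine ⟨fun h => hr₁L (h hr₁mem), fun h => hr₂L (h hr₂mem), ?_⟩
  -- pick l, m in L with Φ l m ≠ 0
  have hLne : (L : Submodule K V) ≠ ⊥ := by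
    intro h; rw [h] at hL; simp at hL
  obtain ⟨l, hlL, hl0⟩ := Submodule.exists_mem_ne_zero_of_ne_bot hLne
  obtain ⟨m, hmL, hd⟩ : ∃ m ∈ L, Φ l m ≠ 0 := by
    by_contra h
    push_neg at h
    have : l ∈ L ⊓ Φ.orthogonal L := ⟨hlL, fun n hn => hrefl _ _ (h n hn)⟩
    rw [hLreg] at this
    exact hl0 this
  set d : K := Φ l m with hdef
  set c : K := Φ r₁ r₂ with hcdef
  -- choose scalar t with t ≠ 0 and c + t * d ≠ 0
  obtain ⟨t, ht0, htc⟩ : ∃ t : K, t ≠ 0 ∧ c + t * d ≠ 0 := by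
    by_cases h : c + d = 0
    · refine ⟨-1, neg_ne_zero.mpr one_ne_zero, ?_⟩
      have hc : c = -d := eq_neg_of_add_eq_zero_left h
      rw [hc]
      have he : -d + -1 * d = -(2 * d) := by ring
      rw [he, neg_ne_zero]
      exact mul_ne_zero hchar hd
    · exact ⟨1, one_ne_zero, by simpa using h⟩
  set u₁ : V := r₁ + l with hu₁def
  set u₂ : V := r₂ + t • m with hu₂def
  have hmL' : t • m ∈ L := L.smul_mem t hmL
  have hu₁0 : u₁ ≠ 0 := by
    intro h
    apply hr₁L
    have : r₁ = -l := by rw [eq_neg_iff_add_eq_zero]; exact h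
    rw [this]; exact L.neg_mem hlL
  have hu₂0 : u₂ ≠ 0 := by
    intro h
    apply hr₂L
    have : r₂ = -(t • m) := by rw [eq_neg_iff_add_eq_zero]; exact h
    rw [this]; exact L.neg_mem hmL'
  -- key value
  have hval : Φ u₁ u₂ = c + t * d := by
    have hm₀ : Φ r₁ m = 0 := hr₁orth' m (hLπ₁ hmL)
    have hl₀ : Φ l r₂ = 0 := hr₂orth l (hLπ₂ hlL)
    simp only [hu₁def, hu₂def, map_add, LinearMap.add_apply, map_smul,
      LinearMap.smul_apply, smul_eq_mul, hm₀, hl₀, hcdef, hdef]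
    ring
  have hΦu : Φ u₁ u₂ ≠ 0 := hval ▸ htc
  refine ⟨K ∙ u₁, K ∙ u₂, finrank_span_singleton hu₁0, finrank_span_singleton hu₂0,
    ?_, ?_, ?_, ?_, ?_, ?_, ?_⟩
  · rw [Submodule.span_singleton_le_iff_mem]
    exact π₁.add_mem hr₁π (hLπ₁ hlL)
  · intro h
    apply hr₁L
    have hu : u₁ ∈ L := h (Submodule.mem_span_singleton_self u₁)
    have : r₁ = u₁ - l := by rw [hu₁def, add_sub_cancel_right]
    rw [this]; exact L.sub_mem hu hlL
  · intro h
    have hu : u₁ ∈ π₁ ⊓ Φ.orthogonal π₁ := h ▸ Submodule.mem_span_singleton_self u₁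
    have hl' : l ∈ Φ.orthogonal π₁ := by
      intro n hn
      have h1 : Φ n u₁ = 0 := hu.2 n hn
      have h2 := hr₁orth n hn
      show Φ n l = 0
      have e : Φ n u₁ = Φ n r₁ + Φ n l := by simp [hu₁def]
      rw [e, h2, zero_add] at h1
      exact h1
    have : l ∈ L ⊓ Φ.orthogonal L := ⟨hlL, (Φ.orthogonal_le hLπ₁) hl'⟩
    rw [hLreg] at this
    exact hl0 this
  · rw [Submodule.span_singleton_le_iff_mem]
    exact π₂.add_mem hr₂π (hLπ₂ hmL')
  · intro h
    apply hr₂L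
    have hu : u₂ ∈ L := h (Submodule.mem_span_singleton_self u₂)
    have : r₂ = u₂ - t • m := by rw [hu₂def, add_sub_cancel_right]
    rw [this]; exact L.sub_mem hu hmL'
  · intro h
    have hu : u₂ ∈ π₂ ⊓ Φ.orthogonal π₂ := h ▸ Submodule.mem_span_singleton_self u₂
    have hm' : t • m ∈ Φ.orthogonal π₂ := by
      intro n hn
      have h1 : Φ n u₂ = 0 := hu.2 n hn
      have h2 := hr₂orth n hn
      show Φ n (t • m) = 0
      have e : Φ n u₂ = Φ n r₂ + Φ n (t • m) := by simp [hu₂def]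
      rw [e, h2, zero_add] at h1
      exact h1
    have hms : t • m ∈ L ⊓ Φ.orthogonal L := ⟨hmL', (Φ.orthogonal_le hLπ₂) hm'⟩
    rw [hLreg] at hms
    exact hd (by
      have : t • m = 0 := hms
      have hm0 : m = 0 := by
        rcases smul_eq_zero.mp this with h | h
        · exact absurd h ht0
        · exact h
      simp [hdef, hm0])
  · -- regularity of span u₁ ⊔ span u₂
    rw [eq_bot_iff]
    rintro x ⟨hxsup, hxorth⟩
    obtain ⟨y, hy, z, hz, rfl⟩ := Submodule.mem_sup.mp hxsup
    obtain ⟨α, rfl⟩ := Submodule.mem_span_singleton.mp hy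
    obtain ⟨β, rfl⟩ := Submodule.mem_span_singleton.mp hz
    have hu₁mem : u₁ ∈ (K ∙ u₁) ⊔ (K ∙ u₂) :=
      Submodule.mem_sup_left (Submodule.mem_span_singleton_self u₁)
    have hu₂mem : u₂ ∈ (K ∙ u₁) ⊔ (K ∙ u₂) :=
      Submodule.mem_sup_right (Submodule.mem_span_singleton_self u₂)
    have h1 : Φ u₁ (α • u₁ + β • u₂) = 0 := hxorth u₁ hu₁mem
    have h2 : Φ u₂ (α • u₁ + β • u₂) = 0 := hxorth u₂ hu₂mem
    have e11 : Φ u₁ u₁ = 0 := halt.self_eq_zero u₁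
    have e22 : Φ u₂ u₂ = 0 := halt.self_eq_zero u₂
    have e21 : Φ u₂ u₁ = -Φ u₁ u₂ := by rw [← halt.neg_eq]
    have h1' : β * Φ u₁ u₂ = 0 := by
      have : Φ u₁ (α • u₁ + β • u₂) = β * Φ u₁ u₂ := by
        simp [e11]
      rwa [this] at h1
    have h2' : α * Φ u₁ u₂ = 0 := by
      have : Φ u₂ (α • u₁ + β • u₂) = -(α * Φ u₁ u₂) := by
        simp [e22, e21]
      rw [this, neg_eq_zero] at h2
      exact h2
    have hβ : β = 0 := by
      rcases mul_eq_zero.mp h1' with h | h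
      · exact h
      · exact absurd h hΦu
    have hα : α = 0 := by
      rcases mul_eq_zero.mp h2' with h | h
      · exact h
      · exact absurd h hΦu
    simp [hα, hβ]
end

section
/- Let V be a finite-dimensional symplectic vector space. For every 1-dimensional subspace p of V there exists a 3-dimensional subspace π with dim Rad(π) = 1 such that p ⊆ π and p ≠ Rad(π). -/
theorem point_in_tangential_plane_off_radical
    {K V : Type*} [Field K] [AddCommGroup V] [Module K V] [FiniteDimensional K V]
    (Φ : LinearMap.BilinForm K V) (hnd : Φ.Nondegenerate) (halt : Φ.IsAlt)
    (hchar : (2 : K) ≠ 0) (hV : 4 ≤ Module.finrank K V)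
    (p : Submodule K V) (hp : Module.finrank K p = 1) :
    ∃ π : Submodule K V, Module.finrank K π = 3 ∧
      Module.finrank K ↥(π ⊓ Φ.orthogonal π) = 1 ∧
      p ≤ π ∧ p ≠ π ⊓ Φ.orthogonal π := by
  classical
  -- obtain nonzero v ∈ p
  obtain ⟨v, hvp, hv0⟩ : ∃ b ∈ p, b ≠ 0 := by
    apply Submodule.exists_mem_ne_zero_of_ne_bot
    intro h
    rw [h] at hp
    simp at hp
  have hpv : p = Submodule.span K {v} := by
    symm
    apply Submodule.eq_of_le_of_finrank_le
    · rwa [Submodule.span_singleton_le_iff_mem]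
    · rw [hp, finrank_span_singleton hv0]
  -- obtain w with Φ v w ≠ 0
  obtain ⟨w, hw⟩ : ∃ w, Φ v w ≠ 0 := by
    by_contra h
    push_neg at h
    exact hv0 (hnd.1 v h)
  -- obtain nonzero u with Φ v u = 0 and Φ w u = 0
  obtain ⟨u, hu0, huv, huw⟩ : ∃ u, u ≠ 0 ∧ Φ v u = 0 ∧ Φ w u = 0 := by
    set f : V →ₗ[K] K × K := LinearMap.prod (Φ v) (Φ w) with hf
    have hker : LinearMap.ker f ≠ ⊥ := by
      intro hbot
      have h1 := LinearMap.finrank_range_add_finrank_ker f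
      rw [hbot, finrank_bot, add_zero] at h1
      have h2 : Module.finrank K ↥(LinearMap.range f) ≤ Module.finrank K (K × K) :=
        Submodule.finrank_le _
      simp [Module.finrank_prod] at h2
      omega
    obtain ⟨u, huf, hu0⟩ := Submodule.exists_mem_ne_zero_of_ne_bot hker
    have := LinearMap.mem_ker.mp huf
    rw [hf, LinearMap.prod_apply, Function.prod, Prod.mk_eq_zero] at this
    exact ⟨u, hu0, this.1, this.2⟩
  have hvu : Φ u v = 0 := (halt.ortho_comm.mp huv : _)
  have hwu : Φ u w = 0 := (halt.ortho_comm.mp huw : _)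
  have hwv : Φ w v = -Φ v w := by
    have h := LinearMap.IsAlt.neg halt v w
    linear_combination -h
  set b : Fin 3 → V := ![v, w, u] with hb
  have hli : LinearIndependent K b := by
    rw [Fintype.linearIndependent_iff]
    intro g hg
    rw [hb] at hg
    simp [Fin.sum_univ_three] at hg
    have h1 : Φ v (g 0 • v + g 1 • w + g 2 • u) = 0 := by rw [hg]; simp
    have h2 : Φ w (g 0 • v + g 1 • w + g 2 • u) = 0 := by rw [hg]; simp
    simp [halt v, halt w, huv, huw, hwv] at h1 h2
    have hg1 : g 1 = 0 := by
      rcases h1 with h | h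
      · exact h
      · exact absurd h hw
    have hg0 : g 0 = 0 := by
      rcases h2 with h | h
      · exact h
      · exact absurd h hw
    have hg2 : g 2 = 0 := by
      rw [hg0, hg1] at hg
      simp at hg
      rcases hg with h | h
      · exact h
      · exact absurd h hu0
    intro i
    fin_cases i <;> assumption
  set π : Submodule K V := Submodule.span K (Set.range b) with hπ
  have hmem : ∀ i, b i ∈ π := fun i => Submodule.subset_span ⟨i, rfl⟩
  have hvπ : v ∈ π := hmem 0
  have hwπ : w ∈ π := hmem 1
  have huπ : u ∈ π := hmem 2
  have hrad : π ⊓ Φ.orthogonal π = Submodule.span K {u} := by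
    apply le_antisymm
    · rintro x ⟨hxπ, hxo⟩
      obtain ⟨c, hc⟩ := (Submodule.mem_span_range_iff_exists_fun K).mp hxπ
      rw [hb] at hc
      simp [Fin.sum_univ_three] at hc
      have h1 : Φ v x = 0 := hxo v hvπ
      have h2 : Φ w x = 0 := hxo w hwπ
      rw [← hc] at h1 h2
      simp [halt v, halt w, huv, huw, hwv] at h1 h2
      have hc1 : c 1 = 0 := by
        rcases h1 with h | h
        · exact h
        · exact absurd h hw
      have hc0 : c 0 = 0 := by
        rcases h2 with h | h
        · exact h
        · exact absurd h hw
      rw [← hc, hc0, hc1]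
      simp
      exact Submodule.smul_mem _ _ (Submodule.mem_span_singleton_self u)
    · rw [Submodule.span_le, Set.singleton_subset_iff]
      refine ⟨huπ, ?_⟩
      show u ∈ Φ.orthogonal π
      rw [LinearMap.BilinForm.mem_orthogonal_iff]
      intro n hn
      obtain ⟨c, hc⟩ := (Submodule.mem_span_range_iff_exists_fun K).mp hn
      rw [hb] at hc
      simp [Fin.sum_univ_three] at hc
      show Φ n u = 0
      rw [← hc]
      simp [huv, huw, halt u]
  refine ⟨π, ?_, ?_, ?_, ?_⟩
  · rw [hπ, finrank_span_eq_card hli]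
    simp
  · rw [hrad, finrank_span_singleton hu0]
  · rw [hpv, Submodule.span_singleton_le_iff_mem]; exact hvπ
  · rw [hrad, hpv]
    intro h
    have : v ∈ Submodule.span K ({u} : Set V) := by
      rw [← h]; exact Submodule.mem_span_singleton_self v
    obtain ⟨c, hc⟩ := Submodule.mem_span_singleton.mp this
    apply hw
    rw [← hc]
    simp [huw]
    exact Or.inr hwu
end

section
/- Let V be a finite-dimensional symplectic vector space with the copolar space structure on 1-dimensional subspaces, where distinct points a₁, a₂ are collinear iff a₁ ⊄ a₂^⊥ (i.e., the line a₁ + a₂ is regular). Then the collinearity graph is connected with diameter at most 2: any two distinct 1-dimensional subspaces can be joined by a path of length at most 2 of pairwise non-orthogonal points. -/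
lemma exists_span_of_finrank_one
    {K V : Type*} [Field K] [AddCommGroup V] [Module K V] [FiniteDimensional K V]
    (a : Submodule K V) (h : Module.finrank K a = 1) :
    ∃ u : V, u ≠ 0 ∧ a = Submodule.span K {u} := by
  have hbot : a ≠ ⊥ := by
    intro hb
    rw [hb] at h
    simp at h
  obtain ⟨u, hu, hu0⟩ := Submodule.exists_mem_ne_zero_of_ne_bot hbot
  refine ⟨u, hu0, ?_⟩
  have hle : Submodule.span K {u} ≤ a := Submodule.span_le.mpr (by simpa using hu)
  have hfr : Module.finrank K (Submodule.span K {u}) = 1 := finrank_span_singleton hu0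
  exact (Submodule.eq_of_le_of_finrank_le hle (by rw [hfr, h])).symm

theorem copolar_space_diameter_two
    {K V : Type*} [Field K] [AddCommGroup V] [Module K V] [FiniteDimensional K V]
    (Φ : LinearMap.BilinForm K V) (hnd : Φ.Nondegenerate) (halt : Φ.IsAlt)
    (hchar : (2 : K) ≠ 0) (hV : 4 ≤ Module.finrank K V)
    (a₁ a₂ : Submodule K V)
    (h₁ : Module.finrank K a₁ = 1) (h₂ : Module.finrank K a₂ = 1)
    (hne : a₁ ≠ a₂) :
    ¬ a₁ ≤ Φ.orthogonal a₂ ∨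
    ∃ c : Submodule K V, Module.finrank K c = 1 ∧ c ≠ a₁ ∧ c ≠ a₂ ∧
      ¬ a₁ ≤ Φ.orthogonal c ∧ ¬ c ≤ Φ.orthogonal a₂ := by
  obtain ⟨u, hu0, rfl⟩ := exists_span_of_finrank_one a₁ h₁
  obtain ⟨v, hv0, rfl⟩ := exists_span_of_finrank_one a₂ h₂
  by_cases hor : Submodule.span K {u} ≤ Φ.orthogonal (Submodule.span K {v})
  · right
    -- find x with Φ u x ≠ 0 and y with Φ v y ≠ 0
    have hx : ∃ x, Φ u x ≠ 0 := by
      by_contra hc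
      push_neg at hc
      exact hu0 (hnd.1 u hc)
    have hy : ∃ y, Φ v y ≠ 0 := by
      by_contra hc
      push_neg at hc
      exact hv0 (hnd.1 v hc)
    obtain ⟨x, hx⟩ := hx
    obtain ⟨y, hy⟩ := hy
    have hw : ∃ w, Φ u w ≠ 0 ∧ Φ v w ≠ 0 := by
      by_cases hvx : Φ v x = 0
      · by_cases huy : Φ u y = 0
        · exact ⟨x + y, by simp [map_add, huy, hx], by simp [map_add, hvx, hy]⟩
        · exact ⟨y, huy, hy⟩
      · exact ⟨x, hx, hvx⟩
    obtain ⟨w, huw, hvw⟩ := hw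
    have hw0 : w ≠ 0 := by
      rintro rfl; simp at huw
    refine ⟨Submodule.span K {w}, finrank_span_singleton hw0, ?_, ?_, ?_, ?_⟩
    · intro hcw
      have : w ∈ Submodule.span K {u} := hcw ▸ Submodule.mem_span_singleton_self w
      obtain ⟨t, rfl⟩ := Submodule.mem_span_singleton.mp this
      apply huw
      simp [halt u]
    · intro hcw
      have : w ∈ Submodule.span K {v} := hcw ▸ Submodule.mem_span_singleton_self w
      obtain ⟨t, rfl⟩ := Submodule.mem_span_singleton.mp this
      apply hvw
      simp [halt v]
    · intro hle
      have hu' : u ∈ Φ.orthogonal (Submodule.span K {w}) :=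
        hle (Submodule.mem_span_singleton_self u)
      have : Φ w u = 0 := hu' w (Submodule.mem_span_singleton_self w)
      apply huw
      have := LinearMap.IsAlt.neg halt u w
      rw [show Φ w u = 0 from hu' w (Submodule.mem_span_singleton_self w)] at this
      exact neg_eq_zero.mp this
    · intro hle
      have hw' : w ∈ Φ.orthogonal (Submodule.span K {v}) :=
        hle (Submodule.mem_span_singleton_self w)
      exact hvw (hw' v (Submodule.mem_span_singleton_self v))
  · left
    exact hor
end
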